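/- (Monotonicity of S, used in the proof of Proposition 3.7.) For all V, Ṽ ∈ L²(ω_z) with V ≥ 0 and Ṽ ≥ 0 almost everywhere, one has ∫ z in ω_z, (S[V] z − S[Ṽ] z) * (V z − Ṽ z) ≤ 0; that is, the map V ↦ S[V] is monotone decreasing in the L²(ω_z) inner-product sense. -/

import Mathlib

open MeasureTheory Real

lemma sumEK (E : ℕ → ℝ) (hE : ∀ n, 0 ≤ E n)
    (hEsum : ∀ lam : ℝ, 0 < lam → Summable fun n => Real.exp (-lam * E n))
    (K : ℝ) (hK : 0 ≤ K) :
    Summable fun n => Real.exp (-E n) * (E n + K) ^ 2 := by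
  have h := (hEsum (1/2) (by norm_num)).mul_left (16 * Real.exp (K / 2))
  refine Summable.of_nonneg_of_le (fun n => by positivity) (fun n => ?_) h
  set y := (E n + K) / 2 with hy'
  have hy : 0 ≤ y := by rw [hy']; linarith [hE n, hK]
  have h1 : y / 2 + 1 ≤ Real.exp (y / 2) := by
    have := Real.add_one_le_exp (y / 2); linarith
  have hsq : (y / 2 + 1) ^ 2 ≤ Real.exp (y / 2) ^ 2 :=
    pow_le_pow_left₀ (by positivity) h1 2
  have hexp : Real.exp (y / 2) ^ 2 = Real.exp y := by
    rw [sq, ← Real.exp_add]; ring_nf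
  have hy2 : y ^ 2 ≤ 4 * Real.exp y := by nlinarith
  have hmul : Real.exp (-E n) * Real.exp y = Real.exp (K / 2) * Real.exp (-(1/2) * E n) := by
    rw [← Real.exp_add, ← Real.exp_add, hy']; ring_nf
  have hEK : (E n + K) ^ 2 = 4 * y ^ 2 := by rw [hy']; ring
  have hepos := (Real.exp_pos (-E n)).le
  calc Real.exp (-E n) * (E n + K) ^ 2 ≤ Real.exp (-E n) * (16 * Real.exp y) := by
        rw [hEK]; nlinarith
    _ = 16 * Real.exp (K / 2) * Real.exp (-(1/2) * E n) := by
        rw [mul_comm]; linear_combination 16 * hmul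

lemma keyIneq (a b : ℕ → ℝ)
    (ha : Summable fun n => Real.exp (-a n)) (hb : Summable fun n => Real.exp (-b n))
    (hpa : Summable fun n => Real.exp (-a n) * (a n - b n))
    (hqb : Summable fun n => Real.exp (-b n) * (a n - b n)) :
    (∑' n, Real.exp (-a n) * (a n - b n)) / (∑' n, Real.exp (-a n))
      - (∑' n, Real.exp (-b n) * (a n - b n)) / (∑' n, Real.exp (-b n)) ≤ 0 := by
  set Za := ∑' n, Real.exp (-a n) with hZa
  set Zb := ∑' n, Real.exp (-b n) with hZb
  have hZa0 : 0 < Za := Summable.tsum_pos ha (fun n => (Real.exp_pos _).le) 0 (Real.exp_pos _)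
  have hZb0 : 0 < Zb := Summable.tsum_pos hb (fun n => (Real.exp_pos _).le) 0 (Real.exp_pos _)
  set p : ℕ → ℝ := fun n => Real.exp (-a n) / Za with hp
  set q : ℕ → ℝ := fun n => Real.exp (-b n) / Zb with hq
  have hp0 : ∀ n, 0 < p n := fun n => div_pos (Real.exp_pos _) hZa0
  have hq0 : ∀ n, 0 < q n := fun n => div_pos (Real.exp_pos _) hZb0
  have hps : Summable p := ha.div_const _
  have hqs : Summable q := hb.div_const _
  have hp1 : ∑' n, p n = 1 := by rw [hp]; simp only [tsum_div_const, ← hZa]; exact div_self hZa0.ne'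
  have hq1 : ∑' n, q n = 1 := by rw [hq]; simp only [tsum_div_const, ← hZb]; exact div_self hZb0.ne'
  have hpd : Summable fun n => p n * (a n - b n) := by
    have := hpa.div_const Za
    refine this.congr fun n => by rw [hp]; ring
  have hqd : Summable fun n => q n * (a n - b n) := by
    have := hqb.div_const Zb
    refine this.congr fun n => by rw [hq]; ring
  have hL : (∑' n, Real.exp (-a n) * (a n - b n)) / Za = ∑' n, p n * (a n - b n) := by
    rw [← tsum_div_const]; exact tsum_congr fun n => by rw [hp]; ring
  have hLq : (∑' n, Real.exp (-b n) * (a n - b n)) / Zb = ∑' n, q n * (a n - b n) := by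
    rw [← tsum_div_const]; exact tsum_congr fun n => by rw [hq]; ring
  rw [hL, hLq, ← Summable.tsum_sub hpd hqd]
  set C := Real.log Zb - Real.log Za with hC
  have hdecomp : ∀ n, p n * (a n - b n) - q n * (a n - b n)
      = (p n - q n) * (Real.log (q n) - Real.log (p n)) + (p n - q n) * C := by
    intro n
    have hlp : Real.log (p n) = -a n - Real.log Za := by
      rw [hp]; simp [Real.log_div (Real.exp_pos _).ne' hZa0.ne', Real.log_exp]
    have hlq : Real.log (q n) = -b n - Real.log Zb := by
      rw [hq]; simp [Real.log_div (Real.exp_pos _).ne' hZb0.ne', Real.log_exp]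
    rw [hlp, hlq, hC]; ring
  have hsum2 : Summable fun n => (p n - q n) * C := ((hps.sub hqs).mul_right C)
  have hsum1 : Summable fun n => (p n - q n) * (Real.log (q n) - Real.log (p n)) := by
    have h := ((hpd.sub hqd)).sub hsum2
    refine h.congr fun n => ?_
    have := hdecomp n; linarith
  calc ∑' n, (p n * (a n - b n) - q n * (a n - b n))
      = ∑' n, ((p n - q n) * (Real.log (q n) - Real.log (p n)) + (p n - q n) * C) :=
        tsum_congr hdecomp
    _ = (∑' n, (p n - q n) * (Real.log (q n) - Real.log (p n))) + ∑' n, (p n - q n) * C :=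
        Summable.tsum_add hsum1 hsum2
    _ ≤ 0 + 0 := by
        refine add_le_add (tsum_nonpos fun n => ?_) ?_
        · rcases le_total (p n) (q n) with h | h
          · exact mul_nonpos_of_nonpos_of_nonneg (by linarith)
              (by have := Real.log_le_log (hp0 n) h; linarith)
          · exact mul_nonpos_of_nonneg_of_nonpos (by linarith)
              (by have := Real.log_le_log (hq0 n) h; linarith)
        · rw [tsum_mul_right, Summable.tsum_sub hps hqs, hp1, hq1]; simp
    _ = 0 := by ring

lemma swapInt {α : Type*} [MeasurableSpace α] (μ : Measure α)
    (g : ℕ → α → ℝ) (hgmeas : ∀ n, Measurable (g n))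
    (φ : α → ℝ) (hφmeas : Measurable φ) (hφint : Integrable φ μ)
    (hφ0 : ∀ᵐ z ∂μ, 0 ≤ φ z)
    (c B : ℕ → ℝ) (hc : ∀ n, 0 ≤ c n) (hB : ∀ n, 0 ≤ B n)
    (hg0 : ∀ n, ∀ᵐ z ∂μ, 0 ≤ g n z) (hgb : ∀ n, ∀ᵐ z ∂μ, g n z ≤ B n)
    (hsum : Summable fun n => c n * B n) :
    (∫ z, (∑' n, c n * g n z) * φ z ∂μ) = (∑' n, c n * ∫ z, φ z * g n z ∂μ)
      ∧ Integrable (fun z => (∑' n, c n * g n z) * φ z) μ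
      ∧ Summable (fun n => c n * ∫ z, φ z * g n z ∂μ) := by
  have hφI : 0 ≤ ∫ z, φ z ∂μ := integral_nonneg_of_ae hφ0
  have hint : ∀ n, Integrable (fun z => φ z * g n z) μ := by
    intro n
    refine Integrable.mono' (hφint.const_mul (B n))
      ((hφmeas.mul (hgmeas n)).aestronglyMeasurable) ?_
    filter_upwards [hφ0, hg0 n, hgb n] with z h1 h2 h3
    rw [Real.norm_eq_abs, abs_of_nonneg (mul_nonneg h1 h2)]
    exact mul_le_mul_of_nonneg_left h3 h1 |>.trans_eq (mul_comm _ _)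
  have hIn0 : ∀ n, 0 ≤ ∫ z, φ z * g n z ∂μ := fun n =>
    integral_nonneg_of_ae (by filter_upwards [hφ0, hg0 n] with z h1 h2 using mul_nonneg h1 h2)
  have hInB : ∀ n, (∫ z, φ z * g n z ∂μ) ≤ B n * ∫ z, φ z ∂μ := by
    intro n
    rw [← integral_const_mul]
    refine integral_mono_ae (hint n) (hφint.const_mul (B n)) ?_
    filter_upwards [hφ0, hgb n] with z h1 h3
    calc φ z * g n z ≤ φ z * B n := mul_le_mul_of_nonneg_left h3 h1
      _ = B n * φ z := mul_comm _ _
  have hsumI : Summable fun n => c n * ∫ z, φ z * g n z ∂μ := by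
    refine Summable.of_nonneg_of_le (fun n => mul_nonneg (hc n) (hIn0 n)) (fun n => ?_)
      (hsum.mul_right (∫ z, φ z ∂μ))
    calc c n * ∫ z, φ z * g n z ∂μ ≤ c n * (B n * ∫ z, φ z ∂μ) :=
          mul_le_mul_of_nonneg_left (hInB n) (hc n)
      _ = c n * B n * ∫ z, φ z ∂μ := by ring
  set f : ℕ → α → ℝ := fun n z => c n * (φ z * g n z) with hf
  have hfmeas : ∀ n, AEStronglyMeasurable (f n) μ := fun n =>
    ((hφmeas.mul (hgmeas n)).const_mul (c n)).aestronglyMeasurable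
  have hfint : ∀ n, Integrable (f n) μ := fun n => (hint n).const_mul (c n)
  have hlin : (∑' n, ∫⁻ z, ‖f n z‖₊ ∂μ) ≠ ⊤ := by
    have heq : ∀ n, (∫⁻ z, ‖f n z‖₊ ∂μ) = ENNReal.ofReal (c n * ∫ z, φ z * g n z ∂μ) := by
      intro n
      erw [← ofReal_integral_norm_eq_lintegral_enorm (hfint n)]
      congr 1
      rw [← integral_const_mul]
      refine integral_congr_ae ?_
      filter_upwards [hφ0, hg0 n] with z h1 h2
      rw [Real.norm_eq_abs, hf, abs_of_nonneg (mul_nonneg (hc n) (mul_nonneg h1 h2))]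
    rw [tsum_congr heq, ← ENNReal.ofReal_tsum_of_nonneg
      (fun n => mul_nonneg (hc n) (hIn0 n)) hsumI]
    exact ENNReal.ofReal_ne_top
  have hswap := integral_tsum hfmeas hlin
  constructor
  · calc (∫ z, (∑' n, c n * g n z) * φ z ∂μ) = ∫ z, ∑' n, f n z ∂μ := by
          refine integral_congr_ae (Filter.Eventually.of_forall fun z => ?_)
          show (∑' n, c n * g n z) * φ z = ∑' n, f n z
          rw [← tsum_mul_right]
          exact tsum_congr fun n => by rw [hf]; ring
      _ = ∑' n, ∫ z, f n z ∂μ := hswap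
      _ = ∑' n, c n * ∫ z, φ z * g n z ∂μ := tsum_congr fun n => integral_const_mul (c n) _
  refine ⟨?_, hsumI⟩
  set G : α → ℝ := fun z => (∑' n, ENNReal.ofReal (c n * g n z)).toReal with hG
  have hGmeas : Measurable G := by
    apply ENNReal.measurable_toReal.comp
    exact Measurable.ennreal_tsum fun n =>
      ENNReal.measurable_ofReal.comp ((hgmeas n).const_mul (c n))
  have hae : ∀ᵐ z ∂μ, (∀ n, 0 ≤ g n z) ∧ (∀ n, g n z ≤ B n) :=
    (ae_all_iff.2 hg0).and (ae_all_iff.2 hgb)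
  have haeT : (fun z => ∑' n, c n * g n z) =ᵐ[μ] G := by
    filter_upwards [hae] with z hz
    have hsz : Summable fun n => c n * g n z :=
      Summable.of_nonneg_of_le (fun n => mul_nonneg (hc n) (hz.1 n))
        (fun n => mul_le_mul_of_nonneg_left (hz.2 n) (hc n)) hsum
    show (∑' n, c n * g n z) = (∑' n, ENNReal.ofReal (c n * g n z)).toReal
    rw [← ENNReal.ofReal_tsum_of_nonneg (fun n => mul_nonneg (hc n) (hz.1 n)) hsz,
      ENNReal.toReal_ofReal (tsum_nonneg fun n => mul_nonneg (hc n) (hz.1 n))]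
  refine Integrable.mono' (hφint.const_mul (∑' n, c n * B n))
    (((hGmeas.mul hφmeas).aestronglyMeasurable).congr ?_) ?_
  · filter_upwards [haeT] with z hz; rw [hz]; rfl
  · filter_upwards [hφ0, haeT, hae] with z h1 h2 hz
    have hsz : Summable fun n => c n * g n z :=
      Summable.of_nonneg_of_le (fun n => mul_nonneg (hc n) (hz.1 n))
        (fun n => mul_le_mul_of_nonneg_left (hz.2 n) (hc n)) hsum
    have hT0 : 0 ≤ ∑' n, c n * g n z := tsum_nonneg fun n => mul_nonneg (hc n) (hz.1 n)
    have hTB : (∑' n, c n * g n z) ≤ ∑' n, c n * B n :=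
      Summable.tsum_le_tsum (fun n => mul_le_mul_of_nonneg_left (hz.2 n) (hc n)) hsz hsum
    rw [Real.norm_eq_abs, abs_of_nonneg (mul_nonneg hT0 h1)]
    calc (∑' n, c n * g n z) * φ z ≤ (∑' n, c n * B n) * φ z :=
      mul_le_mul_of_nonneg_right hTB h1

theorem stmt17
    (ω : Set (ℝ × ℝ)) (hωmeas : MeasurableSet ω) (hωbd : Bornology.IsBounded ω)
    (E : ℕ → ℝ) (hE : ∀ n, 0 ≤ E n)
    (hEsum : ∀ lam : ℝ, 0 < lam → Summable fun n => Real.exp (-lam * E n))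
    (g : ℕ → ℝ × ℝ → ℝ) (hgmeas : ∀ n, Measurable (g n))
    (C₀ K : ℝ) (hC₀ : 0 < C₀) (hK : 0 ≤ K)
    (hg0 : ∀ n, ∀ᵐ z ∂(volume.restrict ω), 0 ≤ g n z)
    (hg1 : ∀ n, (∫ z in ω, g n z) = 1)
    (hgbd : ∀ n, ∀ᵐ z ∂(volume.restrict ω), g n z ≤ C₀ * (E n + K) ^ 2)
    (Vn : ((ℝ × ℝ) → ℝ) → ℕ → ℝ)
    (hVn : ∀ V n, Vn V n = ∫ z in ω, V z * g n z)
    (Zf : ((ℝ × ℝ) → ℝ) → ℝ)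
    (hZf : ∀ V, Zf V = ∑' n, Real.exp (-(E n + Vn V n)))
    (S : ((ℝ × ℝ) → ℝ) → (ℝ × ℝ) → ℝ)
    (hS : ∀ V z, S V z = (∑' n, Real.exp (-(E n + Vn V n)) * g n z) / Zf V) :
    ∀ V W : (ℝ × ℝ) → ℝ, Measurable V → Measurable W →
      IntegrableOn (fun z => V z ^ 2) ω → IntegrableOn (fun z => W z ^ 2) ω →
      (∀ᵐ z ∂(volume.restrict ω), 0 ≤ V z) →
      (∀ᵐ z ∂(volume.restrict ω), 0 ≤ W z) →
      (∫ z in ω, (S V z - S W z) * (V z - W z)) ≤ 0 := by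
  intro V W hVm hWm hV2 hW2 hV0 hW0
  haveI : IsFiniteMeasure (volume.restrict ω) :=
    ⟨Measure.restrict_apply_univ ω ▸ hωbd.measure_lt_top⟩
  -- integrability of V and W
  have hUint : ∀ (U : (ℝ × ℝ) → ℝ), Measurable U → IntegrableOn (fun z => U z ^ 2) ω →
      Integrable U (volume.restrict ω) := by
    intro U hUm hU2
    refine Integrable.mono' ((integrable_const (1 : ℝ)).add hU2)
      hUm.aestronglyMeasurable (Filter.Eventually.of_forall fun z => ?_)
    rw [Real.norm_eq_abs]
    show |U z| ≤ 1 + U z ^ 2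
    nlinarith [abs_nonneg (U z), sq_abs (U z), sq_nonneg (|U z| - 1)]
  have hVint := hUint V hVm hV2
  have hWint := hUint W hWm hW2
  -- nonnegativity of Vn
  have hVn0 : ∀ (U : (ℝ × ℝ) → ℝ), (∀ᵐ z ∂(volume.restrict ω), 0 ≤ U z) → ∀ n, 0 ≤ Vn U n := by
    intro U hU0 n
    rw [hVn]
    exact integral_nonneg_of_ae (by
      filter_upwards [hU0, hg0 n] with z h1 h2 using mul_nonneg h1 h2)
  -- summability preliminaries
  have hEKs := sumEK E hE hEsum K hK
  have hcs : ∀ (U : (ℝ × ℝ) → ℝ), (∀ᵐ z ∂(volume.restrict ω), 0 ≤ U z) →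
      Summable (fun n => Real.exp (-(E n + Vn U n))) := by
    intro U hU0
    refine Summable.of_nonneg_of_le (fun n => (Real.exp_pos _).le) (fun n => ?_)
      ((hEsum 1 one_pos).congr fun n => by rw [neg_one_mul])
    exact Real.exp_le_exp.2 (by linarith [hVn0 U hU0 n])
  have hcB : ∀ (U : (ℝ × ℝ) → ℝ), (∀ᵐ z ∂(volume.restrict ω), 0 ≤ U z) →
      Summable (fun n => Real.exp (-(E n + Vn U n)) * (C₀ * (E n + K) ^ 2)) := by
    intro U hU0
    have hs : Summable fun n => Real.exp (-E n) * (C₀ * (E n + K) ^ 2) :=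
      (hEKs.mul_left C₀).congr fun n => by ring
    refine Summable.of_nonneg_of_le (fun n => by positivity) (fun n => ?_) hs
    have h1 : Real.exp (-(E n + Vn U n)) ≤ Real.exp (-E n) :=
      Real.exp_le_exp.2 (by linarith [hVn0 U hU0 n])
    have h2 : (0:ℝ) ≤ C₀ * (E n + K) ^ 2 := by positivity
    exact mul_le_mul_of_nonneg_right h1 h2
  -- the four applications of swapInt
  obtain ⟨eVV, iVV, sVV⟩ := swapInt (volume.restrict ω) g hgmeas V hVm hVint hV0
    (fun n => Real.exp (-(E n + Vn V n))) (fun n => C₀ * (E n + K) ^ 2)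
    (fun n => (Real.exp_pos _).le) (fun n => by positivity) hg0 hgbd (hcB V hV0)
  obtain ⟨eVW, iVW, sVW⟩ := swapInt (volume.restrict ω) g hgmeas W hWm hWint hW0
    (fun n => Real.exp (-(E n + Vn V n))) (fun n => C₀ * (E n + K) ^ 2)
    (fun n => (Real.exp_pos _).le) (fun n => by positivity) hg0 hgbd (hcB V hV0)
  obtain ⟨eWV, iWV, sWV⟩ := swapInt (volume.restrict ω) g hgmeas V hVm hVint hV0
    (fun n => Real.exp (-(E n + Vn W n))) (fun n => C₀ * (E n + K) ^ 2)
    (fun n => (Real.exp_pos _).le) (fun n => by positivity) hg0 hgbd (hcB W hW0)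
  obtain ⟨eWW, iWW, sWW⟩ := swapInt (volume.restrict ω) g hgmeas W hWm hWint hW0
    (fun n => Real.exp (-(E n + Vn W n))) (fun n => C₀ * (E n + K) ^ 2)
    (fun n => (Real.exp_pos _).le) (fun n => by positivity) hg0 hgbd (hcB W hW0)
  -- rewrite the integrals as Vn
  simp only [← hVn] at eVV eVW eWV eWW sVV sVW sWV sWW
  -- pointwise rewriting of the integrand
  have hintegrand : ∀ z : ℝ × ℝ, (S V z - S W z) * (V z - W z) =
      ((∑' n, Real.exp (-(E n + Vn V n)) * g n z) * V z) / Zf V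
      - ((∑' n, Real.exp (-(E n + Vn V n)) * g n z) * W z) / Zf V
      - ((∑' n, Real.exp (-(E n + Vn W n)) * g n z) * V z) / Zf W
      + ((∑' n, Real.exp (-(E n + Vn W n)) * g n z) * W z) / Zf W := by
    intro z
    rw [hS V z, hS W z]
    ring
  have hcalc : (∫ z in ω, (S V z - S W z) * (V z - W z))
      = (∑' n, Real.exp (-(E n + Vn V n)) * Vn V n) / Zf V
        - (∑' n, Real.exp (-(E n + Vn V n)) * Vn W n) / Zf V
        - (∑' n, Real.exp (-(E n + Vn W n)) * Vn V n) / Zf W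
        + (∑' n, Real.exp (-(E n + Vn W n)) * Vn W n) / Zf W := by
    have I1 : Integrable (fun z => (∑' n, Real.exp (-(E n + Vn V n)) * g n z) * V z / Zf V)
        (volume.restrict ω) := iVV.div_const _
    have I2 : Integrable (fun z => (∑' n, Real.exp (-(E n + Vn V n)) * g n z) * W z / Zf V)
        (volume.restrict ω) := iVW.div_const _
    have I3 : Integrable (fun z => (∑' n, Real.exp (-(E n + Vn W n)) * g n z) * V z / Zf W)
        (volume.restrict ω) := iWV.div_const _
    have I4 : Integrable (fun z => (∑' n, Real.exp (-(E n + Vn W n)) * g n z) * W z / Zf W)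
        (volume.restrict ω) := iWW.div_const _
    have I12 : Integrable (fun z => (∑' n, Real.exp (-(E n + Vn V n)) * g n z) * V z / Zf V
        - (∑' n, Real.exp (-(E n + Vn V n)) * g n z) * W z / Zf V) (volume.restrict ω) :=
      I1.sub I2
    have I123 : Integrable (fun z => (∑' n, Real.exp (-(E n + Vn V n)) * g n z) * V z / Zf V
        - (∑' n, Real.exp (-(E n + Vn V n)) * g n z) * W z / Zf V
        - (∑' n, Real.exp (-(E n + Vn W n)) * g n z) * V z / Zf W) (volume.restrict ω) :=
      I12.sub I3
    rw [integral_congr_ae (Filter.Eventually.of_forall hintegrand), integral_add I123 I4,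
      integral_sub I12 I3, integral_sub I1 I2,
      integral_div, integral_div, integral_div, integral_div, eVV, eVW, eWV, eWW]
  rw [hcalc]
  -- apply the key inequality
  have hkey := keyIneq (fun n => E n + Vn V n) (fun n => E n + Vn W n)
    (hcs V hV0) (hcs W hW0)
    (((sVV.sub sVW)).congr fun n => by ring)
    (((sWV.sub sWW)).congr fun n => by ring)
  simp only [add_sub_add_left_eq_sub] at hkey
  have h1 : (∑' n, Real.exp (-(E n + Vn V n)) * (Vn V n - Vn W n))
      = (∑' n, Real.exp (-(E n + Vn V n)) * Vn V n)
        - (∑' n, Real.exp (-(E n + Vn V n)) * Vn W n) := by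
    rw [← Summable.tsum_sub sVV sVW]
    exact tsum_congr fun n => by ring
  have h2 : (∑' n, Real.exp (-(E n + Vn W n)) * (Vn V n - Vn W n))
      = (∑' n, Real.exp (-(E n + Vn W n)) * Vn V n)
        - (∑' n, Real.exp (-(E n + Vn W n)) * Vn W n) := by
    rw [← Summable.tsum_sub sWV sWW]
    exact tsum_congr fun n => by ring
  rw [h1, h2, ← hZf V, ← hZf W, sub_div, sub_div] at hkey
  linarith [hkey]
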